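/- Fix primitive types l and r and for any type A of L^∘ set A^□ := (l\((l·A)·r))/r. Then: (i) for every type A, the sequent A → A^□ is derivable in L^∘; (ii) for all types A and B, if A → B is derivable in L^∘ then A^□ → B^□ is derivable in L^∘. -/
import Mathlib


/-- Types of the Lambek calculus with the cyclic shift `L^∘`, built from
primitive types `P` by `\` (`ldiv A B = A \ B`), `/` (`rdiv B A = B / A`),
`·` (`mul`) and the cyclic shift `^∘` (`circ`). -/
inductive Fm (P : Type) : Type
  | prim : P → Fm P
  | ldiv : Fm P → Fm P → Fm P
  | rdiv : Fm P → Fm P → Fm P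
  | mul  : Fm P → Fm P → Fm P
  | circ : Fm P → Fm P
deriving DecidableEq

open Fm

/-- Derivability of sequents in the Lambek calculus with the cyclic shift `L^∘`.
The Boolean flag indicates whether the rule (cut) may be used:
`Dv P true` is `L^∘` (with cut), `Dv P false` is its cut-free part. -/
inductive Dv (P : Type) : Bool → List (Fm P) → Fm P → Prop
  | ax (c : Bool) (A : Fm P) :
      Dv P c [A] A
  | ldivL (c : Bool) (Γ Δ Pi : List (Fm P)) (A B C : Fm P) :
      Dv P c (Γ ++ B :: Δ) C → Dv P c Pi A → Pi ≠ [] →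
      Dv P c (Γ ++ Pi ++ ldiv A B :: Δ) C
  | ldivR (c : Bool) (Pi : List (Fm P)) (A B : Fm P) :
      Dv P c (A :: Pi) B → Pi ≠ [] →
      Dv P c Pi (ldiv A B)
  | rdivL (c : Bool) (Γ Δ Pi : List (Fm P)) (A B C : Fm P) :
      Dv P c (Γ ++ B :: Δ) C → Dv P c Pi A → Pi ≠ [] →
      Dv P c (Γ ++ rdiv B A :: (Pi ++ Δ)) C
  | rdivR (c : Bool) (Pi : List (Fm P)) (A B : Fm P) :
      Dv P c (Pi ++ [A]) B → Pi ≠ [] →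
      Dv P c Pi (rdiv B A)
  | mulL (c : Bool) (Γ Δ : List (Fm P)) (A B C : Fm P) :
      Dv P c (Γ ++ A :: B :: Δ) C →
      Dv P c (Γ ++ mul A B :: Δ) C
  | mulR (c : Bool) (Pi Psi : List (Fm P)) (A B : Fm P) :
      Dv P c Pi A → Dv P c Psi B → Pi ≠ [] → Psi ≠ [] →
      Dv P c (Pi ++ Psi) (mul A B)
  | circR (c : Bool) (Pi : List (Fm P)) (A : Fm P) :
      Dv P c Pi A →
      Dv P c Pi (circ A)
  | circL (c : Bool) (A B : Fm P) :
      Dv P c [B] (circ A) →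
      Dv P c [circ B] (circ A)
  | circC (c : Bool) (Pi Psi : List (Fm P)) (A : Fm P) :
      Dv P c (Pi ++ Psi) (circ A) → Pi ≠ [] → Psi ≠ [] →
      Dv P c (Psi ++ Pi) (circ A)
  | cut (Γ Δ Pi : List (Fm P)) (A B : Fm P) :
      Dv P true Pi A → Dv P true (Γ ++ A :: Δ) B → Pi ≠ [] →
      Dv P true (Γ ++ Pi ++ Δ) B

/-- `A^□ := (l \ ((l·A)·r)) / r`. -/
def fbox {P : Type} (l r : P) (A : Fm P) : Fm P :=
  Fm.rdiv (Fm.ldiv (Fm.prim l) (Fm.mul (Fm.mul (Fm.prim l) A) (Fm.prim r))) (Fm.prim r)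

/-- For primitive types `l`, `r`: (i) `A → A^□` is derivable in `L^∘`;
(ii) if `A → B` is derivable in `L^∘` then so is `A^□ → B^□`. -/
theorem box_lemma (P : Type) (l r : P) :
    (∀ A : Fm P, Dv P true [A] (fbox l r A)) ∧
    (∀ A B : Fm P, Dv P true [A] B → Dv P true [fbox l r A] (fbox l r B)) := by
  constructor
  · intro A
    apply Dv.rdivR true [A]
    · apply Dv.ldivR true [A, Fm.prim r]
      · have h : Dv P true ([Fm.prim l, A] ++ [Fm.prim r])
            (mul (mul (Fm.prim l) A) (Fm.prim r)) := by
          apply Dv.mulR true [Fm.prim l, A] [Fm.prim r]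
          · exact Dv.mulR true [Fm.prim l] [A] _ _ (Dv.ax true _) (Dv.ax true _)
              (by simp) (by simp)
          · exact Dv.ax true _
          · simp
          · simp
        simpa using h
      · simp
    · simp
  · intro A B hAB
    apply Dv.rdivR true [fbox l r A]
    · apply Dv.ldivR true [fbox l r A, Fm.prim r]
      swap
      · simp
      have h2 : Dv P true ([Fm.prim l] ++ fbox l r A :: ([Fm.prim r] ++ []))
          (mul (mul (Fm.prim l) B) (Fm.prim r)) := by
        apply Dv.rdivL true [Fm.prim l] [] [Fm.prim r]
        · -- [prim l, ldiv l M_A] → M_B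
          have h3 : Dv P true (([] : List (Fm P)) ++ [Fm.prim l] ++
              ldiv (Fm.prim l) (mul (mul (Fm.prim l) A) (Fm.prim r)) :: [])
              (mul (mul (Fm.prim l) B) (Fm.prim r)) := by
            apply Dv.ldivL true [] [] [Fm.prim l]
            · -- [M_A] → M_B
              have h4 : Dv P true (([] : List (Fm P)) ++
                  mul (mul (Fm.prim l) A) (Fm.prim r) :: [])
                  (mul (mul (Fm.prim l) B) (Fm.prim r)) := by
                apply Dv.mulL
                have h5 : Dv P true (([] : List (Fm P)) ++
                    mul (Fm.prim l) A :: Fm.prim r :: [])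
                    (mul (mul (Fm.prim l) B) (Fm.prim r)) := by
                  apply Dv.mulL
                  -- [l, A, r] → M_B via cut with [A] → B
                  have h6 : Dv P true ([Fm.prim l] ++ [A] ++ [Fm.prim r])
                      (mul (mul (Fm.prim l) B) (Fm.prim r)) := by
                    apply Dv.cut [Fm.prim l] [Fm.prim r] [A] B _ hAB
                    · have h7 : Dv P true ([Fm.prim l, B] ++ [Fm.prim r])
                          (mul (mul (Fm.prim l) B) (Fm.prim r)) := by
                        apply Dv.mulR true [Fm.prim l, B] [Fm.prim r]
                        · exact Dv.mulR true [Fm.prim l] [B] _ _ (Dv.ax true _)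
                            (Dv.ax true _) (by simp) (by simp)
                        · exact Dv.ax true _
                        · simp
                        · simp
                      simpa using h7
                    · simp
                  simpa using h6
                simpa using h5
              simpa using h4
            · exact Dv.ax true _
            · simp
          simpa using h3
        · exact Dv.ax true _
        · simp
      simpa [fbox] using h2
    · simp
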